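/- Let G be a finite simple graph on n vertices, let H and H° be its closed and open neighborhood hypergraphs, and let δ** = min{δ̌(H), δ̌(H°)}. Then for every integer j with 0 ≤ j ≤ γ^LD(G), one has (δ** + 1)·γ^LD(G) ≥ n + δ**·j − T[H,j]; equivalently, γ^LD(G) ≥ (n + δ**·j − T[H,j])/(δ** + 1). -/

import Mathlib

open Finset

variable {V : Type*}

/-- Degree of a vertex `x` in a hypergraph with edge set `F`:
the number of edges containing `x`. -/
def hdeg [DecidableEq V] (F : Finset (Finset V)) (x : V) : ℕ :=
  (F.filter fun e => x ∈ e).card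

/-- Minimum degree over the vertex set `S` of a hypergraph with edge set `F`
(`0` if `S` is empty). -/
def hminDeg [DecidableEq V] (F : Finset (Finset V)) (S : Finset V) : ℕ :=
  if h : S.Nonempty then S.inf' h (hdeg F) else 0

/-- Edge set of the restriction `H[S]`: the distinct traces `e ∩ S` of edges. -/
def hrestrict [DecidableEq V] (E : Finset (Finset V)) (S : Finset V) : Finset (Finset V) :=
  E.image fun e => e ∩ S

/-- Edge set of the pseudo induced subhypergraph on `S`: edges contained in `S`. -/
def hpseudo [DecidableEq V] (E : Finset (Finset V)) (S : Finset V) : Finset (Finset V) :=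
  E.filter fun e => e ⊆ S

/-- Degeneracy of the hypergraph with vertex set `W` and edge set `E`:
the largest minimum degree of an induced subhypergraph. -/
def degenOn [DecidableEq V] (E : Finset (Finset V)) (W : Finset V) : ℕ :=
  W.powerset.sup fun S => hminDeg (hrestrict E S) S

/-- Pseudo degeneracy of the hypergraph with vertex set `W` and edge set `E`. -/
def pdegenOn [DecidableEq V] (E : Finset (Finset V)) (W : Finset V) : ℕ :=
  W.powerset.sup fun S => hminDeg (hpseudo E S) S

/-- Reduced degeneracy of the hypergraph with vertex set `W` and edge set `E`:
the largest pseudo degeneracy of an induced subhypergraph. -/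
def rdegenOn [DecidableEq V] (E : Finset (Finset V)) (W : Finset V) : ℕ :=
  W.powerset.sup fun S => pdegenOn (hrestrict E S) S

def degen [DecidableEq V] [Fintype V] (E : Finset (Finset V)) : ℕ := degenOn E univ
def pdegen [DecidableEq V] [Fintype V] (E : Finset (Finset V)) : ℕ := pdegenOn E univ
def rdegen [DecidableEq V] [Fintype V] (E : Finset (Finset V)) : ℕ := rdegenOn E univ

/-- The distinct nonempty traces of the edges `E` on the set `S`. -/
def ntraces [DecidableEq V] (E : Finset (Finset V)) (S : Finset V) : Finset (Finset V) :=
  (hrestrict E S).erase ∅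

/-- The trace function `T[H,k]`: the largest number of distinct nonempty traces
of `E` on a `k`-element vertex subset. -/
def traceFn [DecidableEq V] [Fintype V] (E : Finset (Finset V)) (k : ℕ) : ℕ :=
  (univ.powerset.filter fun S : Finset V => S.card = k).sup fun S => (ntraces E S).card

/-- The edge set of the closed neighborhood hypergraph of a graph `G`:
the distinct closed neighborhoods `N[x]`. -/
def closedNH [DecidableEq V] [Fintype V] (G : SimpleGraph V) [DecidableRel G.Adj] :
    Finset (Finset V) :=
  univ.image fun x => insert x (G.neighborFinset x)

/-- The edge set of the open neighborhood hypergraph of a graph `G`: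
the distinct open neighborhoods `N(x)`. -/
def openNH [DecidableEq V] [Fintype V] (G : SimpleGraph V) [DecidableRel G.Adj] :
    Finset (Finset V) :=
  univ.image fun x => G.neighborFinset x

/-- `D` is a locating-dominating set of `G`: it is dominating, and distinct
vertices outside `D` have distinct open neighborhood traces on `D`. -/
def IsLD [DecidableEq V] [Fintype V] (G : SimpleGraph V) [DecidableRel G.Adj]
    (D : Finset V) : Prop :=
  (∀ x : V, ((insert x (G.neighborFinset x)) ∩ D).Nonempty) ∧
  ∀ x ∉ D, ∀ y ∉ D, x ≠ y → G.neighborFinset x ∩ D ≠ G.neighborFinset y ∩ D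

/-- The location-domination number `γ^LD(G)`. -/
noncomputable def gammaLD [DecidableEq V] [Fintype V] (G : SimpleGraph V)
    [DecidableRel G.Adj] : ℕ :=
  sInf {k | ∃ D : Finset V, IsLD G D ∧ D.card = k}

/-- Auxiliary family: distinct nonempty traces on `S` of open neighborhoods of
vertices outside `S`. -/
def outTraces [DecidableEq V] [Fintype V] (G : SimpleGraph V) [DecidableRel G.Adj]
    (S : Finset V) : Finset (Finset V) :=
  ((univ \ S).image fun x => G.neighborFinset x ∩ S).erase ∅

lemma outTraces_subset_closed [DecidableEq V] [Fintype V] (G : SimpleGraph V)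
    [DecidableRel G.Adj] (S : Finset V) :
    outTraces G S ⊆ hrestrict (closedNH G) S := by
  intro A hA
  obtain ⟨hne, hA⟩ := Finset.mem_erase.mp hA
  obtain ⟨x, hx, rfl⟩ := Finset.mem_image.mp hA
  have hxS : x ∉ S := (Finset.mem_sdiff.mp hx).2
  refine Finset.mem_image.mpr ⟨insert x (G.neighborFinset x), ?_, ?_⟩
  · exact Finset.mem_image.mpr ⟨x, Finset.mem_univ x, rfl⟩
  · rw [Finset.insert_inter_of_notMem hxS]

lemma outTraces_subset_open [DecidableEq V] [Fintype V] (G : SimpleGraph V)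
    [DecidableRel G.Adj] (S : Finset V) :
    outTraces G S ⊆ hrestrict (openNH G) S := by
  intro A hA
  obtain ⟨hne, hA⟩ := Finset.mem_erase.mp hA
  obtain ⟨x, hx, rfl⟩ := Finset.mem_image.mp hA
  exact Finset.mem_image.mpr ⟨G.neighborFinset x,
    Finset.mem_image.mpr ⟨x, Finset.mem_univ x, rfl⟩, rfl⟩

/-- In any restriction `E[S]` there is a vertex of degree at most `rdegen E`. -/
lemma exists_low_deg [DecidableEq V] [Fintype V] (E : Finset (Finset V))
    {S : Finset V} (hS : S.Nonempty) :
    ∃ v ∈ S, hdeg (hrestrict E S) v ≤ rdegen E := by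
  obtain ⟨v, hv, hvmin⟩ := Finset.exists_mem_eq_inf' hS (hdeg (hrestrict E S))
  refine ⟨v, hv, ?_⟩
  have h1 : hminDeg (hrestrict E S) S = hdeg (hrestrict E S) v := by
    rw [hminDeg, dif_pos hS, hvmin]
  have h2 : hpseudo (hrestrict E S) S = hrestrict E S := by
    refine Finset.filter_true_of_mem ?_
    intro e he
    obtain ⟨f, _, rfl⟩ := Finset.mem_image.mp he
    exact Finset.inter_subset_right
  have h3 : hminDeg (hrestrict E S) S ≤ pdegenOn (hrestrict E S) S := by
    have h := Finset.le_sup (f := fun T => hminDeg (hpseudo (hrestrict E S) T) T)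
      (Finset.mem_powerset_self S)
    rw [h2] at h
    exact h
  have h4 : pdegenOn (hrestrict E S) S ≤ rdegen E :=
    Finset.le_sup (f := fun T => pdegenOn (hrestrict E T) T)
      (Finset.mem_powerset.mpr (Finset.subset_univ S))
  omega

/-- Removing a vertex `v` loses at most `deg v` of the outside traces. -/
lemma outTraces_erase_card [DecidableEq V] [Fintype V] (G : SimpleGraph V)
    [DecidableRel G.Adj] (S : Finset V) (v : V) :
    (outTraces G S).card ≤ (outTraces G (S.erase v)).card + hdeg (outTraces G S) v := by
  have hsub : (outTraces G S).filter (fun A => v ∉ A) ⊆ outTraces G (S.erase v) := by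
    intro A hA
    obtain ⟨hA, hvA⟩ := Finset.mem_filter.mp hA
    obtain ⟨hne, hA⟩ := Finset.mem_erase.mp hA
    obtain ⟨x, hx, rfl⟩ := Finset.mem_image.mp hA
    have hxS : x ∉ S := (Finset.mem_sdiff.mp hx).2
    refine Finset.mem_erase.mpr ⟨hne, Finset.mem_image.mpr ⟨x, ?_, ?_⟩⟩
    · exact Finset.mem_sdiff.mpr ⟨Finset.mem_univ x,
        fun h => hxS (Finset.mem_of_mem_erase h)⟩
    · ext y
      simp only [Finset.mem_inter, Finset.mem_erase]
      constructor
      · rintro ⟨hy, _, hyS⟩; exact ⟨hy, hyS⟩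
      · rintro ⟨hy, hyS⟩
        refine ⟨hy, ?_, hyS⟩
        rintro rfl
        exact hvA (Finset.mem_inter.mpr ⟨hy, hyS⟩)
  have hcard := Finset.card_filter_add_card_filter_not
    (s := outTraces G S) (p := fun A => v ∈ A)
  have h1 : ((outTraces G S).filter (fun A => ¬ v ∈ A)).card ≤
      (outTraces G (S.erase v)).card := Finset.card_le_card hsub
  have h2 : ((outTraces G S).filter (fun A => v ∈ A)).card = hdeg (outTraces G S) v := rfl
  omega

/-- Iterated deletion: shrink `S` to a `j`-set losing at most `d` traces per step. -/
lemma outTraces_shrink [DecidableEq V] [Fintype V] (G : SimpleGraph V)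
    [DecidableRel G.Adj] (d j : ℕ)
    (hd : ∀ S : Finset V, S.Nonempty → ∃ v ∈ S, hdeg (outTraces G S) v ≤ d) :
    ∀ k : ℕ, ∀ S : Finset V, S.card = j + k →
      ∃ S' : Finset V, S'.card = j ∧
        (outTraces G S).card ≤ (outTraces G S').card + d * k := by
  intro k
  induction k with
  | zero => intro S hS; exact ⟨S, by simpa using hS, by simp⟩
  | succ k ih =>
    intro S hS
    have hne : S.Nonempty := Finset.card_pos.mp (by omega)
    obtain ⟨v, hv, hdv⟩ := hd S hne
    obtain ⟨S', h1, h2⟩ := ih (S.erase v) (by rw [Finset.card_erase_of_mem hv]; omega)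
    refine ⟨S', h1, ?_⟩
    calc (outTraces G S).card
        ≤ (outTraces G (S.erase v)).card + hdeg (outTraces G S) v :=
          outTraces_erase_card G S v
      _ ≤ ((outTraces G S').card + d * k) + d := Nat.add_le_add h2 hdv
      _ = (outTraces G S').card + d * (k + 1) := by ring

/-- with `H`, `H°` the closed and open neighborhood hypergraphs of an
`n`-vertex graph `G` and `δ** = min{δ̌(H), δ̌(H°)}`, for every `0 ≤ j ≤ γ^LD(G)` one
has `(δ** + 1)·γ^LD(G) ≥ n + δ**·j − T[H,j]`, i.e.
`γ^LD(G) ≥ (n + δ**·j − T[H,j])/(δ** + 1)`. -/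
theorem stmt10 [DecidableEq V] [Fintype V] (G : SimpleGraph V) [DecidableRel G.Adj] :
    ∀ j : ℕ, j ≤ gammaLD G →
      Fintype.card V + min (rdegen (closedNH G)) (rdegen (openNH G)) * j ≤
        (min (rdegen (closedNH G)) (rdegen (openNH G)) + 1) * gammaLD G +
          traceFn (closedNH G) j := by
  intro j hj
  set a := rdegen (closedNH G) with ha
  set b := rdegen (openNH G) with hb
  set d := min a b with hd
  -- an optimal locating-dominating set exists
  have hsetne : {k | ∃ D : Finset V, IsLD G D ∧ D.card = k}.Nonempty := by
    refine ⟨(univ : Finset V).card, univ, ⟨?_, ?_⟩, rfl⟩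
    · intro x
      exact ⟨x, by simp⟩
    · intro x hx
      exact absurd (Finset.mem_univ x) hx
  obtain ⟨D, hD, hDcard⟩ := Nat.sInf_mem hsetne
  have hγ : D.card = gammaLD G := hDcard
  -- n ≤ γ + |outTraces G D|
  have hinj : Set.InjOn (fun x => G.neighborFinset x ∩ D) ((univ \ D : Finset V) : Set V) := by
    intro x hx y hy hxy
    by_contra hne'
    exact hD.2 x (Finset.mem_sdiff.mp hx).2 y (Finset.mem_sdiff.mp hy).2 hne' hxy
  have himg : ((univ \ D).image fun x => G.neighborFinset x ∩ D).card = (univ \ D).card :=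
    Finset.card_image_of_injOn hinj
  have hno : ∅ ∉ ((univ \ D).image fun x => G.neighborFinset x ∩ D) := by
    intro h
    obtain ⟨x, hx, hx0⟩ := Finset.mem_image.mp h
    have hxD : x ∉ D := (Finset.mem_sdiff.mp hx).2
    have hdom := hD.1 x
    rw [Finset.insert_inter_of_notMem hxD, hx0] at hdom
    exact Finset.not_nonempty_empty hdom
  have houtD : (outTraces G D).card = (univ \ D).card := by
    rw [outTraces, Finset.erase_eq_of_notMem hno, himg]
  have hsdiff : (univ \ D).card = Fintype.card V - D.card := by
    rw [Finset.card_sdiff_of_subset (Finset.subset_univ D), Finset.card_univ]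
  have hDle : D.card ≤ Fintype.card V := Finset.card_le_univ D
  have hn : Fintype.card V ≤ gammaLD G + (outTraces G D).card := by omega
  -- the degree hypothesis for shrinking
  have hdeg' : ∀ S : Finset V, S.Nonempty → ∃ v ∈ S, hdeg (outTraces G S) v ≤ d := by
    intro S hS
    rcases le_total a b with h | h
    · obtain ⟨v, hv, hdv⟩ := exists_low_deg (closedNH G) hS
      refine ⟨v, hv, ?_⟩
      have hmono : hdeg (outTraces G S) v ≤ hdeg (hrestrict (closedNH G) S) v :=
        Finset.card_le_card (Finset.filter_subset_filter _ (outTraces_subset_closed G S))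
      have : d = a := min_eq_left h
      omega
    · obtain ⟨v, hv, hdv⟩ := exists_low_deg (openNH G) hS
      refine ⟨v, hv, ?_⟩
      have hmono : hdeg (outTraces G S) v ≤ hdeg (hrestrict (openNH G) S) v :=
        Finset.card_le_card (Finset.filter_subset_filter _ (outTraces_subset_open G S))
      have : d = b := min_eq_right h
      omega
  -- shrink D to a j-set
  obtain ⟨S', hS'card, hS'⟩ := outTraces_shrink G d j hdeg' (gammaLD G - j) D (by omega)
  -- bound the traces on S' by traceFn
  have hT : (outTraces G S').card ≤ traceFn (closedNH G) j := by
    have h1 : outTraces G S' ⊆ ntraces (closedNH G) S' := by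
      intro A hA
      exact Finset.mem_erase.mpr ⟨(Finset.mem_erase.mp hA).1,
        outTraces_subset_closed G S' hA⟩
    refine le_trans (Finset.card_le_card h1) ?_
    exact Finset.le_sup (f := fun S => (ntraces (closedNH G) S).card)
      (Finset.mem_filter.mpr ⟨Finset.mem_powerset.mpr (Finset.subset_univ S'), hS'card⟩)
  -- assemble
  have hkey : d * (gammaLD G - j) + d * j = d * gammaLD G := by
    rw [← Nat.mul_add, Nat.sub_add_cancel hj]
  calc Fintype.card V + d * j
      ≤ (gammaLD G + (outTraces G D).card) + d * j := by omega
    _ ≤ (gammaLD G + ((outTraces G S').card + d * (gammaLD G - j))) + d * j := by omega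
    _ ≤ (gammaLD G + (traceFn (closedNH G) j + d * (gammaLD G - j))) + d * j := by omega
    _ = (d + 1) * gammaLD G + traceFn (closedNH G) j := by
        rw [Nat.add_mul, Nat.one_mul]
        omega
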